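/- For the discrete operator A_h* with well-prepared field E_j = (2T₀/√ρ_{∞,j})(√ρ_{∞,j+1} − √ρ_{∞,j−1})/(2Δx_j), discrete mass conservation holds: Σ_j Δx_j (A_h* u)_j √ρ_{∞,j} = 0 for every grid vector u. -/
import Mathlib


/-- Discrete adjoint operator
`(A_h* u)_j = −√T₀[(u_{j+1} − u_{j−1})/(2Δx_j) + (E_j/(2T₀))u_j]`
on a periodic mesh indexed by `ZMod N`. -/
noncomputable def AhStar {N : ℕ} (T₀ : ℝ) (Δx E u : ZMod N → ℝ) : ZMod N → ℝ :=
  fun j => -(Real.sqrt T₀ * ((u (j + 1) - u (j - 1)) / (2 * Δx j) + E j / (2 * T₀) * u j))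

/-- with the well-prepared field
`E_j = (2T₀/√ρ_{∞,j})(√ρ_{∞,j+1} − √ρ_{∞,j−1})/(2Δx_j)`, discrete mass
conservation holds: `Σ_j Δx_j (A_h* u)_j √ρ_{∞,j} = 0` for every grid vector `u`. -/
theorem discrete_mass_conservation
    {N : ℕ} [NeZero N]
    (T₀ : ℝ) (hT₀ : 0 < T₀)
    (Δx : ZMod N → ℝ) (hΔx : ∀ j, 0 < Δx j)
    (ρ : ZMod N → ℝ) (hρ : ∀ j, 0 < ρ j)
    (E : ZMod N → ℝ)
    (hE : ∀ j, E j = 2 * T₀ / Real.sqrt (ρ j)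
      * ((Real.sqrt (ρ (j + 1)) - Real.sqrt (ρ (j - 1))) / (2 * Δx j)))
    (u : ZMod N → ℝ) :
    ∑ j : ZMod N, Δx j * AhStar T₀ Δx E u j * Real.sqrt (ρ j) = 0 := by
  set c : ℝ := Real.sqrt T₀ / 2 with hc
  set f : ZMod N → ℝ := fun j => u (j + 1) * Real.sqrt (ρ j) + u j * Real.sqrt (ρ (j + 1))
    with hf
  set g : ZMod N → ℝ := fun j => u (j - 1) * Real.sqrt (ρ j) + u j * Real.sqrt (ρ (j - 1))
    with hg
  have key : ∀ j, Δx j * AhStar T₀ Δx E u j * Real.sqrt (ρ j) = c * g j - c * f j := by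
    intro j
    have hx : Δx j ≠ 0 := (hΔx j).ne'
    have hT : T₀ ≠ 0 := hT₀.ne'
    have hr : Real.sqrt (ρ j) ≠ 0 := (Real.sqrt_pos.mpr (hρ j)).ne'
    simp only [AhStar, hE j, hc, hf, hg]
    field_simp
    ring
  rw [Finset.sum_congr rfl fun j _ => key j, Finset.sum_sub_distrib,
    ← Finset.mul_sum, ← Finset.mul_sum]
  have : ∑ j : ZMod N, f j = ∑ j : ZMod N, g j := by
    refine Fintype.sum_equiv (Equiv.addRight (1 : ZMod N)) _ _ fun j => ?_
    simp only [hf, hg, Equiv.coe_addRight, add_sub_cancel_right]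
    ring
  rw [this, sub_self]
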